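/- (Compatibility with conjugation.) Let μ and ν be partitions, all partitions being padded with zero parts to a common number of parts N with N ≥ μ_1 and N ≥ ν_1 (the *-operation is unchanged by appending zero parts). Then (μ,ν)* = (λ,ρ) if and only if (ν′,μ′)* = (λ′,ρ′), i.e., λ(ν′,μ′) = λ(μ,ν)′ and ρ(ν′,μ′) = ρ(μ,ν)′, where σ′ denotes the conjugate partition of σ. -/

import Mathlib

/-- A partition with `n` (possibly zero) parts: a weakly decreasing sequence of
nonnegative integers, recorded 0-indexed, vanishing from index `n` on. -/
def IsPartitionN (n : ℕ) (μ : ℕ → ℕ) : Prop :=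
  Antitone μ ∧ ∀ i, n ≤ i → μ i = 0

/-- A partition (finitely many nonzero parts), 0-indexed. -/
def IsPartition (μ : ℕ → ℕ) : Prop :=
  Antitone μ ∧ ∃ N, ∀ i, N ≤ i → μ i = 0

/-- `λ(μ,ν)_k = μ_k − k + #{j : 1 ≤ j ≤ n, ν_j − j ≥ μ_k − k}`, 0-indexed,
so the (k+1)-st part of `λ(μ,ν)`, as an integer. -/
def lamStar (n : ℕ) (μ ν : ℕ → ℕ) (k : ℕ) : ℤ :=
  (μ k : ℤ) - (k + 1) +
    ((Finset.range n).filter (fun j => (μ k : ℤ) - (k + 1) ≤ (ν j : ℤ) - (j + 1))).card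

/-- `ρ(μ,ν)_j = ν_j − j + 1 + #{k : 1 ≤ k ≤ n, μ_k − k > ν_j − j}`, 0-indexed. -/
def rhoStar (n : ℕ) (μ ν : ℕ → ℕ) (j : ℕ) : ℤ :=
  (ν j : ℤ) - (j + 1) + 1 +
    ((Finset.range n).filter (fun k => (ν j : ℤ) - (j + 1) < (μ k : ℤ) - (k + 1))).card

/-- `λ(μ,ν)` as a sequence of natural numbers. -/
def lamStarN (n : ℕ) (μ ν : ℕ → ℕ) (k : ℕ) : ℕ := (lamStar n μ ν k).toNat

/-- `ρ(μ,ν)` as a sequence of natural numbers. -/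
def rhoStarN (n : ℕ) (μ ν : ℕ → ℕ) (k : ℕ) : ℕ := (rhoStar n μ ν k).toNat

/-- The conjugate partition: `μ′_i = #{k : μ_k ≥ i}` (1-indexed), recorded 0-indexed. -/
noncomputable def conjP (μ : ℕ → ℕ) (i : ℕ) : ℕ := {k : ℕ | i + 1 ≤ μ k}.ncard

/-- Remove a full column of height `k`: subtract 1 from the first `k` parts. -/
def removeCol (k : ℕ) (σ : ℕ → ℕ) : ℕ → ℕ := fun j => if j < k then σ j - 1 else σ j

/-- An LR filling of the skew shape `θ/ν` of type `μ` (all 0-indexed; cell `(i,j)`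
is row `i+1`, column `j+1`; the entry `0` marks cells outside the skew shape).
Rows weakly increase, columns strictly increase, the entry `m+1` occurs `μ m`
times, and the reverse reading word (rows top to bottom, each row right to left)
is a lattice permutation. It is required that `ν ⊆ θ`. -/
def IsLRFilling (θ ν μ : ℕ → ℕ) (T : ℕ → ℕ → ℕ) : Prop :=
  (∀ i, ν i ≤ θ i) ∧
  (∀ i j, ν i ≤ j → j < θ i → 1 ≤ T i j) ∧
  (∀ i j, ¬(ν i ≤ j ∧ j < θ i) → T i j = 0) ∧
  (∀ i j j', ν i ≤ j → j ≤ j' → j' < θ i → T i j ≤ T i j') ∧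
  (∀ i i' j, i < i' → ν i ≤ j → j < θ i → ν i' ≤ j → j < θ i' → T i j < T i' j) ∧
  (∀ m : ℕ, {p : ℕ × ℕ | T p.1 p.2 = m + 1}.ncard = μ m) ∧
  (∀ m i j : ℕ,
    {p : ℕ × ℕ | T p.1 p.2 = m + 2 ∧ (p.1 < i ∨ (p.1 = i ∧ j ≤ p.2))}.ncard ≤
    {p : ℕ × ℕ | T p.1 p.2 = m + 1 ∧ (p.1 < i ∨ (p.1 = i ∧ j ≤ p.2))}.ncard)

/-- The Littlewood–Richardson coefficient `c_{μν}^θ`: the number of LR fillings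
of `θ/ν` of type `μ` (equal to `0` when `ν ⊄ θ`). -/
noncomputable def lrCoeff (μ ν θ : ℕ → ℕ) : ℕ := Nat.card {T : ℕ → ℕ → ℕ // IsLRFilling θ ν μ T}

/-- Compatibility of the `*`-operation with conjugation: with all partitions
padded to `N` parts, `N ≥ μ_1`, `N ≥ ν_1`, one has `λ(ν′,μ′) = λ(μ,ν)′` and
`ρ(ν′,μ′) = ρ(μ,ν)′`. -/
-- Auxiliary lemmas

def Fc (N : ℕ) (σ : ℕ → ℕ) (x : ℤ) : ℕ :=
  ((Finset.range N).filter (fun k => x ≤ (σ k : ℤ) - (k + 1))).card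

lemma fc_le (N : ℕ) (σ : ℕ → ℕ) (x : ℤ) : Fc N σ x ≤ N :=
  (Finset.card_filter_le _ _).trans_eq (Finset.card_range N)

lemma conjP_eq_card (σ : ℕ → ℕ) (M : ℕ) (hvan : ∀ i, M ≤ i → σ i = 0) (i : ℕ) :
    conjP σ i = ((Finset.range M).filter (fun k => i + 1 ≤ σ k)).card := by
  rw [conjP, ← Set.ncard_coe_finset]
  congr 1
  ext k
  simp only [Set.mem_setOf_eq, Finset.coe_filter, Finset.mem_range]
  constructor
  · intro h
    refine ⟨?_, h⟩
    by_contra hk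
    push_neg at hk
    rw [hvan k hk] at h; omega
  · exact fun h => h.2

lemma conjP_le (σ : ℕ → ℕ) (N : ℕ) (hvan : ∀ i, N ≤ i → σ i = 0) (i : ℕ) : conjP σ i ≤ N := by
  rw [conjP_eq_card σ N hvan i]
  exact (Finset.card_filter_le _ _).trans_eq (Finset.card_range N)

lemma conjP_antitone (σ : ℕ → ℕ) (N : ℕ) (hvan : ∀ i, N ≤ i → σ i = 0) :
    Antitone (conjP σ) := by
  intro a b hab
  rw [conjP_eq_card σ N hvan a, conjP_eq_card σ N hvan b]
  apply Finset.card_le_card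
  intro k hk
  simp only [Finset.mem_filter, Finset.mem_range] at hk ⊢
  exact ⟨hk.1, by omega⟩

lemma conjP_zero (σ : ℕ → ℕ) (N : ℕ) (hle : ∀ m, σ m ≤ N) (k : ℕ) (hk : N ≤ k) :
    conjP σ k = 0 := by
  have h : {m | k + 1 ≤ σ m} = ∅ := by
    ext m
    simp only [Set.mem_setOf_eq, Set.mem_empty_iff_false, iff_false]
    have := hle m; omega
  rw [conjP, h, Set.ncard_empty]

lemma conjP_galois (σ : ℕ → ℕ) (N : ℕ) (hσ : Antitone σ) (hvan : ∀ i, N ≤ i → σ i = 0)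
    (i j : ℕ) : j + 1 ≤ σ i ↔ i + 1 ≤ conjP σ j := by
  have hvan' : ∀ k, max N (i+1) ≤ k → σ k = 0 := fun k hk => hvan k (le_trans (le_max_left _ _) hk)
  rw [conjP_eq_card σ (max N (i+1)) hvan' j]
  constructor
  · intro h
    have hsub : Finset.range (i+1) ⊆ (Finset.range (max N (i+1))).filter (fun k => j + 1 ≤ σ k) := by
      intro k hk
      simp only [Finset.mem_range] at hk
      simp only [Finset.mem_filter, Finset.mem_range]
      exact ⟨lt_of_lt_of_le hk (le_max_right _ _), le_trans h (hσ (by omega))⟩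
    simpa using Finset.card_le_card hsub
  · intro h
    by_contra hc
    push_neg at hc
    have hsub : (Finset.range (max N (i+1))).filter (fun k => j + 1 ≤ σ k) ⊆ Finset.range i := by
      intro k hk
      simp only [Finset.mem_filter, Finset.mem_range] at hk
      simp only [Finset.mem_range]
      by_contra hik
      push_neg at hik
      have := hσ hik
      omega
    have := Finset.card_le_card hsub
    simp only [Finset.card_range] at this
    omega

lemma fc_ge_iff (N : ℕ) (τ : ℕ → ℕ) (hτ : Antitone τ) (k : ℕ) (hk : k < N) (x : ℤ) :
    k + 1 ≤ Fc N τ x ↔ x ≤ (τ k : ℤ) - (k + 1) := by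
  unfold Fc
  constructor
  · intro h
    by_contra hc
    push_neg at hc
    have hsub : (Finset.range N).filter (fun m => x ≤ (τ m : ℤ) - (m + 1)) ⊆ Finset.range k := by
      intro m hm
      simp only [Finset.mem_filter, Finset.mem_range] at hm
      simp only [Finset.mem_range]
      by_contra hmk
      push_neg at hmk
      have h1 : (τ m : ℤ) ≤ (τ k : ℤ) := by exact_mod_cast hτ hmk
      omega
    have := Finset.card_le_card hsub
    simp only [Finset.card_range] at this
    omega
  · intro h
    have hsub : Finset.range (k+1) ⊆ (Finset.range N).filter (fun m => x ≤ (τ m : ℤ) - (m + 1)) := by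
      intro m hm
      simp only [Finset.mem_range] at hm
      simp only [Finset.mem_filter, Finset.mem_range]
      refine ⟨by omega, ?_⟩
      have h1 : (τ k : ℤ) ≤ (τ m : ℤ) := by exact_mod_cast hτ (by omega : m ≤ k)
      have h2 : (m : ℤ) ≤ (k : ℤ) := by exact_mod_cast (by omega : m ≤ k)
      omega
    have := Finset.card_le_card hsub
    simpa using this

lemma fc_add_le (N : ℕ) (σ : ℕ → ℕ) (hb : ∀ j, j < N → σ j ≤ N) (x : ℤ) (hx : x ≤ N) :
    x + (Fc N σ x : ℤ) ≤ N := by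
  have hsub : (Finset.range N).filter (fun k => x ≤ (σ k : ℤ) - (k + 1)) ⊆
      Finset.range ((N - x).toNat) := by
    intro j hj
    simp only [Finset.mem_filter, Finset.mem_range] at hj
    simp only [Finset.mem_range]
    have h1 : (σ j : ℤ) ≤ N := by exact_mod_cast hb j hj.1
    omega
  have := Finset.card_le_card hsub
  simp only [Finset.card_range] at this
  unfold Fc
  omega

lemma card_split (N : ℕ) (p q : ℕ → Prop) [DecidablePred p] [DecidablePred q] :
    ((Finset.range N).filter p).card =
      ((Finset.range N).filter (fun a => p a ∧ q a)).card +
      ((Finset.range N).filter (fun a => p a ∧ ¬ q a)).card := by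
  classical
  rw [← Finset.card_union_of_disjoint]
  · congr 1
    ext a
    simp only [Finset.mem_union, Finset.mem_filter, Finset.mem_range]
    tauto
  · rw [Finset.disjoint_left]
    intro a ha hb
    simp only [Finset.mem_filter] at ha hb
    tauto

lemma fc_conj (N : ℕ) (σ : ℕ → ℕ) (hσ : Antitone σ) (h0 : σ 0 ≤ N)
    (hvan : ∀ i, N ≤ i → σ i = 0) (x : ℤ) (hx1 : -(N:ℤ) ≤ x) (hx2 : x ≤ N) :
    (Fc N (conjP σ) x : ℤ) = -x + Fc N σ (-x) := by
  classical
  have hle : ∀ m, σ m ≤ N := fun m => le_trans (hσ (Nat.zero_le m)) h0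
  have hgal := conjP_galois σ N hσ hvan
  -- LHS split
  have split1 : Fc N (conjP σ) x =
      ((Finset.range N).filter (fun j => (x ≤ (conjP σ j : ℤ) - (j + 1)) ∧ (j:ℤ) + 1 + x ≤ 0)).card +
      ((Finset.range N).filter (fun j => (x ≤ (conjP σ j : ℤ) - (j + 1)) ∧ ¬((j:ℤ) + 1 + x ≤ 0))).card := by
    unfold Fc
    exact card_split N _ (fun j => (j:ℤ) + 1 + x ≤ 0)
  -- first part equals (-x).toNat
  have part1 : ((Finset.range N).filter (fun j => (x ≤ (conjP σ j : ℤ) - (j + 1)) ∧ (j:ℤ) + 1 + x ≤ 0)).card = (-x).toNat := by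
    have h : (Finset.range N).filter (fun j => (x ≤ (conjP σ j : ℤ) - (j + 1)) ∧ (j:ℤ) + 1 + x ≤ 0) = Finset.range ((-x).toNat) := by
      ext j
      simp only [Finset.mem_filter, Finset.mem_range]
      constructor
      · rintro ⟨hjN, -, h2⟩
        omega
      · intro hj
        have hc : (0:ℤ) ≤ (conjP σ j : ℤ) := Int.natCast_nonneg _
        refine ⟨by omega, by omega, by omega⟩
    rw [h, Finset.card_range]
  -- bijection for the second part
  have part2 : ((Finset.range N).filter (fun j => (x ≤ (conjP σ j : ℤ) - (j + 1)) ∧ ¬((j:ℤ) + 1 + x ≤ 0))).card =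
      ((Finset.range N).filter (fun i => (-x ≤ (σ i : ℤ) - (i + 1)) ∧ x ≤ (i:ℤ))).card := by
    refine Finset.card_bij' (fun (j:ℕ) _ => ((x + (j:ℤ)).toNat)) (fun (i:ℕ) _ => (((i:ℤ) - x).toNat)) ?_ ?_ ?_ ?_
    · -- hi : maps into target
      intro j hj
      simp only [Finset.mem_filter, Finset.mem_range] at hj
      obtain ⟨hjN, hpj, hq⟩ := hj
      have hxj : (0:ℤ) ≤ x + j := by omega
      have hiz : (((x + (j:ℤ)).toNat : ℤ)) = x + j := by omega
      have h1 : ((x + (j:ℤ)).toNat + 1 : ℕ) ≤ conjP σ j := by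
        have : (((x + (j:ℤ)).toNat:ℤ) + 1) ≤ (conjP σ j : ℤ) := by omega
        exact_mod_cast this
      have h2 : j + 1 ≤ σ ((x + (j:ℤ)).toNat) := (hgal _ j).mpr h1
      have h2' : ((j:ℤ) + 1) ≤ (σ ((x + (j:ℤ)).toNat) : ℤ) := by exact_mod_cast h2
      have hiN : (x + (j:ℤ)).toNat < N := by
        by_contra hc
        push_neg at hc
        rw [hvan _ hc] at h2
        omega
      simp only [Finset.mem_filter, Finset.mem_range]
      exact ⟨hiN, by omega, by omega⟩
    · -- hj : maps back
      intro i hi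
      simp only [Finset.mem_filter, Finset.mem_range] at hi
      obtain ⟨hiN, hPi, hxi⟩ := hi
      have hjz : ((((i:ℤ) - x).toNat : ℤ)) = (i:ℤ) - x := by omega
      have hσi : ((((i:ℤ) - x).toNat:ℤ) + 1) ≤ (σ i : ℤ) := by omega
      have h2 : ((i:ℤ) - x).toNat + 1 ≤ σ i := by exact_mod_cast hσi
      have h1 : i + 1 ≤ conjP σ (((i:ℤ) - x).toNat) := (hgal i _).mp h2
      have h1' : ((i:ℤ) + 1) ≤ (conjP σ (((i:ℤ) - x).toNat) : ℤ) := by exact_mod_cast h1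
      have hσiN : (σ i : ℤ) ≤ N := by exact_mod_cast hle i
      simp only [Finset.mem_filter, Finset.mem_range]
      refine ⟨by omega, by omega, by omega⟩
    · intro j hj
      simp only [Finset.mem_filter, Finset.mem_range] at hj
      beta_reduce
      omega
    · intro i hi
      simp only [Finset.mem_filter, Finset.mem_range] at hi
      beta_reduce
      omega
  -- RHS split
  have split2 : Fc N σ (-x) =
      ((Finset.range N).filter (fun i => (-x ≤ (σ i : ℤ) - (i + 1)) ∧ x ≤ (i:ℤ))).card +
      ((Finset.range N).filter (fun i => (-x ≤ (σ i : ℤ) - (i + 1)) ∧ ¬(x ≤ (i:ℤ)))).card := by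
    unfold Fc
    exact card_split N _ (fun i => x ≤ (i:ℤ))
  have part3 : ((Finset.range N).filter (fun i => (-x ≤ (σ i : ℤ) - (i + 1)) ∧ ¬(x ≤ (i:ℤ)))).card = x.toNat := by
    have h : (Finset.range N).filter (fun i => (-x ≤ (σ i : ℤ) - (i + 1)) ∧ ¬(x ≤ (i:ℤ))) = Finset.range (x.toNat) := by
      ext i
      simp only [Finset.mem_filter, Finset.mem_range]
      constructor
      · rintro ⟨hiN, -, h2⟩
        omega
      · intro hi
        have hc : (0:ℤ) ≤ (σ i : ℤ) := Int.natCast_nonneg _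
        refine ⟨by omega, by omega, by omega⟩
    rw [h, Finset.card_range]
  rw [split1, part1, part2, split2, part3]
  push_cast
  omega

theorem star_conjugate (N : ℕ) (μ ν : ℕ → ℕ)
    (hμ : IsPartitionN N μ) (hν : IsPartitionN N ν)
    (hμ1 : μ 0 ≤ N) (hν1 : ν 0 ≤ N) :
    (∀ k, lamStarN N (conjP ν) (conjP μ) k = conjP (lamStarN N μ ν) k) ∧
    (∀ k, rhoStarN N (conjP ν) (conjP μ) k = conjP (rhoStarN N μ ν) k) := by
  obtain ⟨hμa, hμv⟩ := hμ
  obtain ⟨hνa, hνv⟩ := hν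
  have hμle : ∀ m, μ m ≤ N := fun m => le_trans (hμa (Nat.zero_le m)) hμ1
  have hνle : ∀ m, ν m ≤ N := fun m => le_trans (hνa (Nat.zero_le m)) hν1
  have hμ'a : Antitone (conjP μ) := conjP_antitone μ N hμv
  have hν'a : Antitone (conjP ν) := conjP_antitone ν N hνv
  have hμ'le : ∀ m, conjP μ m ≤ N := conjP_le μ N hμv
  have hν'le : ∀ m, conjP ν m ≤ N := conjP_le ν N hνv
  have lam_eq : ∀ (α β : ℕ → ℕ) (k : ℕ), lamStar N α β k
      = (α k : ℤ) - (k + 1) + Fc N β ((α k : ℤ) - (k + 1)) := fun _ _ _ => rfl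
  have rho_eq : ∀ (α β : ℕ → ℕ) (k : ℕ), rhoStar N α β k
      = (β k : ℤ) - (k + 1) + 1 + Fc N α ((β k : ℤ) - (k + 1) + 1) := by
    intro α β k
    have h : (Finset.range N).filter (fun m => (β k : ℤ) - (k + 1) < (α m : ℤ) - (m + 1))
        = (Finset.range N).filter (fun m => (β k : ℤ) - (k + 1) + 1 ≤ (α m : ℤ) - (m + 1)) :=
      Finset.filter_congr (fun m _ => by constructor <;> intro h <;> omega)
    unfold rhoStar Fc
    rw [h]
  have hlamle : ∀ m, lamStarN N μ ν m ≤ N := by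
    intro m
    have h1 := fc_add_le N ν (fun j _ => hνle j) ((μ m : ℤ) - (m + 1))
      (by have := hμle m; omega)
    simp only [lamStarN]
    rw [lam_eq]
    omega
  have hrhole : ∀ m, rhoStarN N μ ν m ≤ N := by
    intro m
    have h1 := fc_add_le N μ (fun j _ => hμle j) ((ν m : ℤ) - (m + 1) + 1)
      (by have := hνle m; omega)
    simp only [rhoStarN]
    rw [rho_eq]
    omega
  have hlamvan : ∀ m, N ≤ m → lamStarN N μ ν m = 0 := by
    intro m hm
    have e : ((μ m : ℕ) : ℤ) = 0 := by rw [hμv m hm]; rfl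
    have h1 := fc_le N ν ((μ m : ℤ) - (m + 1))
    simp only [lamStarN]
    rw [lam_eq]
    omega
  have hrhovan : ∀ m, N ≤ m → rhoStarN N μ ν m = 0 := by
    intro m hm
    have e : ((ν m : ℕ) : ℤ) = 0 := by rw [hνv m hm]; rfl
    have h1 := fc_le N μ ((ν m : ℤ) - (m + 1) + 1)
    simp only [rhoStarN]
    rw [rho_eq]
    omega
  constructor
  · intro k
    rw [conjP_eq_card (lamStarN N μ ν) N hlamvan k]
    simp only [lamStarN]
    rw [lam_eq]
    by_cases hk : k < N
    · have hcb2 : ((conjP ν k : ℕ) : ℤ) ≤ N := by exact_mod_cast hν'le k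
      have h1 := fc_conj N μ hμa hμ1 hμv ((conjP ν k : ℤ) - (k + 1))
        (by omega) (by omega)
      have h2 : ((conjP ν k : ℤ) - (k + 1) +
          (Fc N (conjP μ) ((conjP ν k : ℤ) - (k + 1)) : ℤ)).toNat
          = Fc N μ (-((conjP ν k : ℤ) - (k + 1))) := by omega
      rw [h2]
      unfold Fc
      refine congrArg Finset.card (Finset.filter_congr ?_)
      intro m hm
      simp only [Finset.mem_range] at hm
      rw [lam_eq μ ν m]
      have hμm : ((μ m : ℕ) : ℤ) ≤ N := by exact_mod_cast hμle m
      have h3 := fc_conj N ν hνa hν1 hνv (-((μ m : ℤ) - (m + 1)))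
        (by omega) (by omega)
      simp only [neg_neg] at h3
      have h4 := fc_ge_iff N (conjP ν) hν'a k hk (-((μ m : ℤ) - (m + 1)))
      omega
    · push_neg at hk
      have hz : ((conjP ν k : ℕ) : ℤ) = 0 := by rw [conjP_zero ν N hνle k hk]; rfl
      have hfc := fc_le N (conjP μ) ((conjP ν k : ℤ) - (k + 1))
      have hfilter : (Finset.range N).filter (fun m => k + 1 ≤ (lamStar N μ ν m).toNat) = ∅ := by
        apply Finset.filter_eq_empty_iff.mpr
        intro m _
        have h5 := hlamle m
        simp only [lamStarN] at h5
        omega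
      erw [hfilter, Finset.card_empty]
      omega
  · intro k
    rw [conjP_eq_card (rhoStarN N μ ν) N hrhovan k]
    simp only [rhoStarN]
    rw [rho_eq]
    by_cases hk : k < N
    · have hcb2 : ((conjP μ k : ℕ) : ℤ) ≤ N := by exact_mod_cast hμ'le k
      have h1 := fc_conj N ν hνa hν1 hνv ((conjP μ k : ℤ) - (k + 1) + 1)
        (by omega) (by omega)
      have h2 : ((conjP μ k : ℤ) - (k + 1) + 1 +
          (Fc N (conjP ν) ((conjP μ k : ℤ) - (k + 1) + 1) : ℤ)).toNat
          = Fc N ν (-((conjP μ k : ℤ) - (k + 1) + 1)) := by omega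
      rw [h2]
      unfold Fc
      refine congrArg Finset.card (Finset.filter_congr ?_)
      intro j hj
      simp only [Finset.mem_range] at hj
      rw [rho_eq μ ν j]
      have hνj : ((ν j : ℕ) : ℤ) ≤ N := by exact_mod_cast hνle j
      have h3 := fc_conj N μ hμa hμ1 hμv (-((ν j : ℤ) - (j + 1) + 1))
        (by omega) (by omega)
      simp only [neg_neg] at h3
      have h4 := fc_ge_iff N (conjP μ) hμ'a k hk (-((ν j : ℤ) - (j + 1) + 1))
      omega
    · push_neg at hk
      have hz : ((conjP μ k : ℕ) : ℤ) = 0 := by rw [conjP_zero μ N hμle k hk]; rfl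
      have hfc := fc_le N (conjP ν) ((conjP μ k : ℤ) - (k + 1) + 1)
      have hfilter : (Finset.range N).filter (fun m => k + 1 ≤ (rhoStar N μ ν m).toNat) = ∅ := by
        apply Finset.filter_eq_empty_iff.mpr
        intro m _
        have h5 := hrhole m
        simp only [rhoStarN] at h5
        omega
      erw [hfilter, Finset.card_empty]
      omega
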